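/- For every r ∈ ℕ there is an r-coloring of the edges of K_{ℕ,ℕ} in which every monochromatic path has upper density at most 1/r. -/

import Mathlib

open Filter

open scoped Classical in
noncomputable def upperDensity (S : Set ℕ) : ℝ :=
  Filter.limsup (fun t : ℕ => (((Finset.range t).filter (fun n => n ∈ S)).card : ℝ) / t)
    Filter.atTop

/-- `S` is the vertex set of a (possibly finite, one-way infinite, or two-way infinite)
path of color `i` in the `r`-colored complete bipartite graph `K_{ℕ,ℕ}` (parts: evens
and odds): the vertices of the path are indexed injectively by an interval of `ℤ`,
and consecutive vertices are joined by edges of `K_{ℕ,ℕ}` of color `i`. -/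
def IsMonoPath (r : ℕ) (c : ℕ → ℕ → Fin r) (i : Fin r) (S : Set ℕ) : Prop :=
  ∃ (I : Set ℤ) (f : ℤ → ℕ), I.OrdConnected ∧ Set.InjOn f I ∧ S = f '' I ∧
    ∀ k : ℤ, k ∈ I → k + 1 ∈ I →
      (f k) % 2 ≠ (f (k + 1)) % 2 ∧ c (f k) (f (k + 1)) = i

/-- Auxiliary: "difference" of pieces, `((u/2)%r - (v/2)%r) mod r`. -/
def gcol (r u v : ℕ) : ℕ := ((u / 2) % r + (r - (v / 2) % r)) % r

/-- Symmetric coloring: an odd-even edge gets the piece difference (odd minus even). -/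
def colFun (r u v : ℕ) : ℕ :=
  if u % 2 = 1 ∧ v % 2 = 0 then gcol r u v
  else if v % 2 = 1 ∧ u % 2 = 0 then gcol r v u else 0

lemma colFun_symm (r u v : ℕ) : colFun r u v = colFun r v u := by
  unfold colFun
  rcases Nat.mod_two_eq_zero_or_one u with hu | hu <;>
    rcases Nat.mod_two_eq_zero_or_one v with hv | hv <;> simp [hu, hv]

lemma colFun_lt (r u v : ℕ) (hr : 0 < r) : colFun r u v < r := by
  unfold colFun gcol
  split
  · exact Nat.mod_lt _ hr
  · split
    · exact Nat.mod_lt _ hr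
    · exact hr

lemma modlem {r x y : ℕ} (hx : x < r) (hy : y < r) :
    (y + (x + (r - y)) % r) % r = x := by
  rw [Nat.add_mod_mod]
  have h : y + (x + (r - y)) = x + r := by omega
  rw [h, Nat.add_mod_right, Nat.mod_eq_of_lt hx]

/-- Counting a residue class in `range t`. -/
lemma card_res (m e t : ℕ) :
    ((Finset.range t).filter (fun n => n % m = e)).card ≤ t / m + 1 := by
  have h : ((Finset.range t).filter (fun n => n % m = e)).card ≤
      (Finset.range (t / m + 1)).card := by
    apply Finset.card_le_card_of_injOn (fun n => n / m)
    · intro n hn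
      exact Finset.mem_range.2 (lt_of_le_of_lt
        (Nat.div_le_div_right (Finset.mem_range.1 (Finset.mem_filter.1 hn).1).le) (Nat.lt_succ_self _))
    · intro a ha b hb hab
      simp only [Finset.coe_filter, Set.mem_setOf_eq, Finset.mem_range] at ha hb
      simp only at hab
      calc a = m * (a / m) + a % m := (Nat.div_add_mod a m).symm
        _ = m * (b / m) + b % m := by rw [hab, ha.2, hb.2]
        _ = b := Nat.div_add_mod b m
  simpa using h

/-- Decomposition of `n mod 2r`. -/
lemma mod_two_mul (r n : ℕ) (hr : 0 < r) :
    n % (2 * r) = 2 * ((n / 2) % r) + n % 2 := by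
  conv_lhs => rw [← Nat.div_add_mod n 2, ← Nat.div_add_mod (n / 2) r]
  rw [Nat.mul_add, ← Nat.mul_assoc, Nat.add_assoc, Nat.mul_comm 2 r,
    Nat.mul_comm (r * 2) (n / 2 / r), Nat.mul_comm r 2]
  rw [show n / 2 / r * (2 * r) = 2 * r * (n / 2 / r) by ring]
  rw [Nat.mul_add_mod]
  have h1 : (n / 2) % r < r := Nat.mod_lt _ hr
  have h2 : n % 2 < 2 := Nat.mod_lt _ (by omega)
  exact Nat.mod_eq_of_lt (by omega)

/-- If `S` lives in two residue classes mod `2r`, its upper density is at most `1/r`. -/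
lemma density_le_of_two_residues (r : ℕ) (hr : 0 < r) (e₁ e₂ : ℕ) (S : Set ℕ)
    (hS : ∀ n ∈ S, n % (2 * r) = e₁ ∨ n % (2 * r) = e₂) :
    upperDensity S ≤ 1 / r := by
  classical
  unfold upperDensity
  have key : ∀ t : ℕ, 1 ≤ t →
      (((Finset.range t).filter (fun n => n ∈ S)).card : ℝ) / t ≤ 1 / r + 2 / t := by
    intro t ht
    have h1 : ((Finset.range t).filter (fun n => n ∈ S)).card ≤ 2 * (t / (2 * r)) + 2 := by
      calc ((Finset.range t).filter (fun n => n ∈ S)).card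
          ≤ ((Finset.range t).filter
              (fun n => n % (2 * r) = e₁ ∨ n % (2 * r) = e₂)).card := by
            apply Finset.card_le_card
            intro n hn
            simp only [Finset.mem_filter, Finset.mem_range] at hn ⊢
            exact ⟨hn.1, hS n hn.2⟩
        _ ≤ ((Finset.range t).filter (fun n => n % (2 * r) = e₁)).card +
            ((Finset.range t).filter (fun n => n % (2 * r) = e₂)).card := by
            rw [Finset.filter_or]
            exact Finset.card_union_le _ _
        _ ≤ (t / (2 * r) + 1) + (t / (2 * r) + 1) :=
            add_le_add (card_res _ _ _) (card_res _ _ _)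
        _ = 2 * (t / (2 * r)) + 2 := by ring
    have ht' : (0 : ℝ) < t := by exact_mod_cast ht
    have hr' : (0 : ℝ) < r := by exact_mod_cast hr
    rw [div_le_iff₀ ht']
    have h2 : ((t / (2 * r) : ℕ) : ℝ) ≤ (t : ℝ) / (2 * r) := by
      have := Nat.cast_div_le (α := ℝ) (m := t) (n := 2 * r)
      push_cast at this ⊢
      exact this
    have h3 : (((Finset.range t).filter (fun n => n ∈ S)).card : ℝ) ≤
        2 * ((t : ℝ) / (2 * r)) + 2 := by
      calc (((Finset.range t).filter (fun n => n ∈ S)).card : ℝ)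
          ≤ ((2 * (t / (2 * r)) + 2 : ℕ) : ℝ) := by exact_mod_cast h1
        _ ≤ 2 * ((t : ℝ) / (2 * r)) + 2 := by push_cast; linarith
    calc (((Finset.range t).filter (fun n => n ∈ S)).card : ℝ)
        ≤ 2 * ((t : ℝ) / (2 * r)) + 2 := h3
      _ = (1 / r + 2 / t) * t := by field_simp
  have hbound : ∀ᶠ t : ℕ in atTop,
      (((Finset.range t).filter (fun n => n ∈ S)).card : ℝ) / t ≤ 1 / r + 2 / t :=
    eventually_atTop.2 ⟨1, fun t ht => key t ht⟩
  have htend : Tendsto (fun t : ℕ => 1 / (r : ℝ) + 2 / t) atTop (nhds (1 / r)) := by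
    have h0 := tendsto_const_div_atTop_nhds_zero_nat (2 : ℝ)
    have := (tendsto_const_nhds (x := (1 / r : ℝ)) (f := atTop (α := ℕ))).add h0
    simpa using this
  calc limsup (fun t : ℕ => (((Finset.range t).filter (fun n => n ∈ S)).card : ℝ) / t) atTop
      ≤ limsup (fun t : ℕ => 1 / (r : ℝ) + 2 / t) atTop := by
        refine Filter.limsup_le_limsup hbound ?_ ?_
        · apply Filter.IsBoundedUnder.isCoboundedUnder_le
          apply Filter.isBoundedUnder_of
          exact ⟨0, fun t => by positivity⟩
        · exact htend.isBoundedUnder_le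
    _ = 1 / r := htend.limsup_eq

theorem stmt_14 (r : ℕ) (hr : 0 < r) :
    ∃ c : ℕ → ℕ → Fin r,
      (∀ u v : ℕ, c u v = c v u) ∧
      ∀ (i : Fin r) (S : Set ℕ), IsMonoPath r c i S → upperDensity S ≤ 1 / r := by
  refine ⟨fun u v => ⟨colFun r u v, colFun_lt r u v hr⟩, ?_, ?_⟩
  · intro u v
    simp [colFun_symm r u v]
  · rintro i S ⟨I, f, hI, -, rfl, hedge⟩
    -- the invariant
    set φ : ℕ → ℕ := fun n =>
      if n % 2 = 1 then (n / 2) % r else ((n / 2) % r + i.val) % r with hφ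
    have hstep : ∀ u v : ℕ, u % 2 ≠ v % 2 → colFun r u v = i.val → φ u = φ v := by
      intro u v hne hc
      rcases Nat.mod_two_eq_zero_or_one u with hu | hu <;>
        rcases Nat.mod_two_eq_zero_or_one v with hv | hv
      · exact absurd (hu.trans hv.symm) hne
      · -- u even, v odd : colFun = gcol r v u
        have hc' : gcol r v u = i.val := by
          unfold colFun at hc
          rw [if_neg (by omega), if_pos ⟨hv, hu⟩] at hc
          exact hc
        have hx : (u / 2) % r < r := Nat.mod_lt _ hr
        have hy : (v / 2) % r < r := Nat.mod_lt _ hr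
        simp only [hφ]
        rw [if_neg (by omega), if_pos hv, ← hc']
        unfold gcol
        exact modlem hy hx
      · -- u odd, v even : colFun = gcol r u v
        have hc' : gcol r u v = i.val := by
          unfold colFun at hc
          rw [if_pos ⟨hu, hv⟩] at hc
          exact hc
        have hx : (u / 2) % r < r := Nat.mod_lt _ hr
        have hy : (v / 2) % r < r := Nat.mod_lt _ hr
        simp only [hφ]
        rw [if_pos hu, if_neg (by omega), ← hc']
        unfold gcol
        exact (modlem hx hy).symm
      · exact absurd (hu.trans hv.symm) hne
    have hchain : ∀ n : ℕ, ∀ k : ℤ, k ∈ I → k + n ∈ I → φ (f k) = φ (f (k + n))  := by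
      intro n
      induction n with
      | zero => intro k hk _; simp
      | succ n ih =>
        intro k hk hk1
        have hn0 : (0 : ℤ) ≤ (n : ℤ) := Int.natCast_nonneg n
        have hcast : ((n + 1 : ℕ) : ℤ) = (n : ℤ) + 1 := by push_cast; ring
        rw [hcast] at hk1 ⊢
        have hmem : k + (n : ℤ) ∈ I := hI.out hk hk1 ⟨by omega, by omega⟩
        have hmem1 : k + (n : ℤ) + 1 ∈ I := by
          rw [show k + (n : ℤ) + 1 = k + ((n : ℤ) + 1) by ring]; exact hk1
        have hed := hedge (k + n) hmem hmem1
        have hcv : colFun r (f (k + n)) (f (k + n + 1)) = i.val := by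
          have := congrArg Fin.val hed.2
          exact this
        have := hstep _ _ hed.1 hcv
        rw [ih k hk hmem, show k + ((n : ℤ) + 1) = k + (n : ℤ) + 1 by ring]
        exact this
    have hconst : ∀ k ∈ I, ∀ l ∈ I, φ (f k) = φ (f l) := by
      intro k hk l hl
      rcases le_total k l with h | h
      · have : l = k + ((l - k).toNat : ℤ) := by omega
        rw [this]
        exact hchain _ k hk (by rw [← this]; exact hl)
      · have : k = l + ((k - l).toNat : ℤ) := by omega
        rw [this]
        exact (hchain _ l hl (by rw [← this]; exact hk)).symm
    rcases Set.eq_empty_or_nonempty I with hIe | ⟨k₀, hk₀⟩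
    · apply density_le_of_two_residues r hr 0 0
      intro n hn
      rw [hIe] at hn
      simp at hn
    · set a := φ (f k₀) with ha
      have hφlt : ∀ n, φ n < r := by
        intro n
        simp only [hφ]
        split <;> exact Nat.mod_lt _ hr
      have har : a < r := hφlt _
      set b := (a + (r - i.val)) % r with hb
      have hbr : b < r := Nat.mod_lt _ hr
      have hbi : (b + i.val) % r = a := by
        rw [hb, Nat.mod_add_mod]
        have : a + (r - i.val) + i.val = a + r := by
          have := i.isLt; omega
        rw [this, Nat.add_mod_right, Nat.mod_eq_of_lt har]
      apply density_le_of_two_residues r hr (2 * a + 1) (2 * b)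
      rintro n ⟨k, hk, rfl⟩
      have hphi : φ (f k) = a := hconst k hk k₀ hk₀
      rw [mod_two_mul r (f k) hr]
      rcases Nat.mod_two_eq_zero_or_one (f k) with hpar | hpar
      · -- even: (f k / 2) % r = b
        right
        simp only [hφ] at hphi
        rw [if_neg (by omega)] at hphi
        have hy : (f k / 2) % r < r := Nat.mod_lt _ hr
        have hyb : (f k / 2) % r = b := by
          have hmod : ((f k / 2) % r + i.val) % r = (b + i.val) % r := hphi.trans hbi.symm
          have := Nat.ModEq.add_right_cancel' i.val hmod
          have := this
          unfold Nat.ModEq at this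
          rw [Nat.mod_eq_of_lt hy, Nat.mod_eq_of_lt hbr] at this
          exact this
        omega
      · left
        simp only [hφ] at hphi
        rw [if_pos hpar] at hphi
        omega
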